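/- The trigonometric polynomial f(θ) = 160/240 - (60/240)cos θ - (96/240)cos 2θ - (4/240)cos 3θ is nonnegative on [-π,π] and has a unique zero at θ = 0, which is of order 2 (i.e., f(0) = f'(0) = 0 and f''(0) > 0). -/

import Mathlib

open Real

/-- The IgA symbol `f(θ) = (1/240)(160 - 60 cos θ - 96 cos 2θ - 4 cos 3θ)`. -/
noncomputable def fIgA (θ : ℝ) : ℝ :=
  (1 / 240) * (160 - 60 * Real.cos θ - 96 * Real.cos (2 * θ) - 4 * Real.cos (3 * θ))

lemma fIgA_factor (θ : ℝ) :
    fIgA θ = (1 / 15) * (1 - Real.cos θ) * ((Real.cos θ) ^ 2 + 13 * Real.cos θ + 16) := by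
  unfold fIgA
  rw [Real.cos_two_mul, Real.cos_three_mul]
  ring

lemma hasDerivAt_fIgA (θ : ℝ) :
    HasDerivAt fIgA
      ((1 / 240) * (60 * Real.sin θ + 192 * Real.sin (2 * θ) + 12 * Real.sin (3 * θ))) θ := by
  have h1 := Real.hasDerivAt_cos θ
  have h2 := (Real.hasDerivAt_cos (2 * θ)).comp θ ((hasDerivAt_id θ).const_mul 2)
  have h3 := (Real.hasDerivAt_cos (3 * θ)).comp θ ((hasDerivAt_id θ).const_mul 3)
  have := ((((hasDerivAt_const θ (160 : ℝ)).sub (h1.const_mul 60)).sub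
    (h2.const_mul 96)).sub (h3.const_mul 4)).const_mul (1 / 240 : ℝ)
  refine this.congr_deriv (by ring) |>.congr_of_eventuallyEq (Filter.Eventually.of_forall fun y => ?_)
  simp [fIgA]

lemma deriv_fIgA : deriv fIgA =
    fun θ => (1 / 240) * (60 * Real.sin θ + 192 * Real.sin (2 * θ) + 12 * Real.sin (3 * θ)) := by
  funext θ
  exact (hasDerivAt_fIgA θ).deriv

lemma hasDerivAt_deriv_fIgA (θ : ℝ) :
    HasDerivAt (deriv fIgA)
      ((1 / 240) * (60 * Real.cos θ + 384 * Real.cos (2 * θ) + 36 * Real.cos (3 * θ))) θ := by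
  rw [deriv_fIgA]
  have h1 := Real.hasDerivAt_sin θ
  have h2 := (Real.hasDerivAt_sin (2 * θ)).comp θ ((hasDerivAt_id θ).const_mul 2)
  have h3 := (Real.hasDerivAt_sin (3 * θ)).comp θ ((hasDerivAt_id θ).const_mul 3)
  have := (((h1.const_mul 60).add (h2.const_mul 192)).add
    (h3.const_mul 12)).const_mul (1 / 240 : ℝ)
  refine this.congr_deriv (by ring) |>.congr_of_eventuallyEq (Filter.Eventually.of_forall fun y => ?_)
  simp

/-- `fIgA` is nonnegative on `[-π,π]` with a unique zero at `θ = 0`, which has order 2: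
`f(0) = f'(0) = 0` and `f''(0) > 0`. -/
theorem fIgA_nonneg_unique_zero :
    (∀ θ ∈ Set.Icc (-π) π, 0 ≤ fIgA θ ∧ (fIgA θ = 0 ↔ θ = 0)) ∧
    fIgA 0 = 0 ∧ deriv fIgA 0 = 0 ∧ 0 < deriv (deriv fIgA) 0 := by
  have hpi := Real.pi_pos
  refine ⟨fun θ hθ => ?_, ?_, ?_, ?_⟩
  · obtain ⟨h1, h2⟩ := hθ
    have hc1 : Real.cos θ ≤ 1 := Real.cos_le_one θ
    have hc2 : -1 ≤ Real.cos θ := Real.neg_one_le_cos θ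
    have hquad : (0:ℝ) < (Real.cos θ) ^ 2 + 13 * Real.cos θ + 16 := by nlinarith
    rw [fIgA_factor]
    constructor
    · nlinarith
    · constructor
      · intro h
        have hcos : Real.cos θ = 1 := by nlinarith
        have := (Real.cos_eq_one_iff_of_lt_of_lt (x := θ) (by nlinarith) (by nlinarith)).1 hcos
        exact this
      · intro h; simp [h]
  · norm_num [fIgA]
  · rw [deriv_fIgA]; simp
  · rw [(hasDerivAt_deriv_fIgA 0).deriv]
    norm_num
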